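/- Every sandwich function Ψ gives rise to a packing bound function A as follows: for a bounded Borel subset C of ℝ^d, let G(C) be the graph with vertex set C and an edge between distinct x, y ∈ C exactly when |x − y| ≥ 2, and set A(C) = Ψ(G(C)). Then A satisfies the sphere bound, Lipschitz, union, and mesh axioms of a packing bound function. -/

import Mathlib

open scoped Pointwise
open MeasureTheory Bornology Filter

/-- The join `G * H` of two graphs: the disjoint union of `G` and `H` together with all
edges between the two parts. -/
def graphJoin {V W : Type} (G : SimpleGraph V) (H : SimpleGraph W) :
    SimpleGraph (V ⊕ W) where
  Adj x y := match x, y with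
    | Sum.inl a, Sum.inl b => G.Adj a b
    | Sum.inr a, Sum.inr b => H.Adj a b
    | Sum.inl _, Sum.inr _ => True
    | Sum.inr _, Sum.inl _ => True
  symm := ⟨fun x y => match x, y with
    | Sum.inl _, Sum.inl _ => fun h => G.adj_symm h
    | Sum.inr _, Sum.inr _ => fun h => H.adj_symm h
    | Sum.inl _, Sum.inr _ => fun _ => trivial
    | Sum.inr _, Sum.inl _ => fun _ => trivial⟩
  loopless := ⟨fun x => by cases x <;> simp⟩

/-- A sandwich function: an assignment of a nonnegative real number to every graph with
finite chromatic number, taking the value `0` on empty graphs and `1` on one-point graphs,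
monotone under graph homomorphisms, and additive under joins. -/
structure SandwichFunction where
  toFun : ∀ {V : Type}, SimpleGraph V → ℝ
  nonneg : ∀ {V : Type} (G : SimpleGraph V), G.chromaticNumber ≠ ⊤ → 0 ≤ toFun G
  empty_eq : ∀ {V : Type} (G : SimpleGraph V), IsEmpty V → toFun G = 0
  single_eq : ∀ {V : Type} (G : SimpleGraph V), Nonempty V → Subsingleton V → toFun G = 1
  mono : ∀ {V W : Type} (G : SimpleGraph V) (H : SimpleGraph W),
    G.chromaticNumber ≠ ⊤ → H.chromaticNumber ≠ ⊤ → (G →g H) → toFun G ≤ toFun H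
  join_add : ∀ {V W : Type} (G : SimpleGraph V) (H : SimpleGraph W),
    G.chromaticNumber ≠ ⊤ → H.chromaticNumber ≠ ⊤ →
    toFun (graphJoin G H) = toFun G + toFun H

/-- The graph on a subset `C` of a metric space whose edges are the pairs of (distinct)
points at distance at least 2. -/
def farGraph {E : Type} [MetricSpace E] (C : Set E) : SimpleGraph C where
  Adj x y := x ≠ y ∧ 2 ≤ dist (x : E) (y : E)
  symm := ⟨fun x y h => ⟨h.1.symm, by rw [dist_comm]; exact h.2⟩⟩
  loopless := ⟨fun x h => h.1 rfl⟩


lemma colorable_of_hom {V W : Type} {G : SimpleGraph V} {H : SimpleGraph W}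
    (f : G →g H) {n : ℕ} (h : H.Colorable n) : G.Colorable n :=
  ⟨h.some.comp f⟩

lemma chromaticNumber_ne_top_of_hom {V W : Type} {G : SimpleGraph V} {H : SimpleGraph W}
    (f : G →g H) (h : H.chromaticNumber ≠ ⊤) : G.chromaticNumber ≠ ⊤ := by
  rw [SimpleGraph.chromaticNumber_ne_top_iff_exists] at *
  obtain ⟨n, hn⟩ := h
  exact ⟨n, colorable_of_hom f hn⟩

lemma coord_dist_le {d : ℕ} (x y : EuclideanSpace ℝ (Fin d)) (i : Fin d) :
    dist (x i) (y i) ≤ dist x y := by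
  rw [EuclideanSpace.dist_eq]
  have h1 : dist (x i) (y i) ^ 2 ≤ ∑ j, dist (x j) (y j) ^ 2 :=
    Finset.single_le_sum (f := fun j => dist (x j) (y j) ^ 2)
      (fun j _ => sq_nonneg _) (Finset.mem_univ i)
  calc dist (x i) (y i) = Real.sqrt (dist (x i) (y i) ^ 2) := (Real.sqrt_sq dist_nonneg).symm
    _ ≤ _ := Real.sqrt_le_sqrt h1

lemma farGraph_chromaticNumber_ne_top {d : ℕ} {C : Set (EuclideanSpace ℝ (Fin d))}
    (hC : IsBounded C) : (farGraph C).chromaticNumber ≠ ⊤ := by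
  classical
  rw [SimpleGraph.chromaticNumber_ne_top_iff_exists]
  obtain ⟨R, hR⟩ := Metric.isBounded_iff.mp hC
  set M : ℕ := ⌈((d : ℝ) + 1) * R⌉₊ + 2 with hM
  have hMlt : ((d : ℝ) + 1) * R + 1 < (M : ℝ) + 1 := by
    have h := Nat.le_ceil (((d : ℝ) + 1) * R)
    have : ((⌈((d : ℝ) + 1) * R⌉₊ : ℝ)) ≤ (M : ℝ) - 2 := by
      rw [hM]; push_cast; linarith
    linarith
  have valid : ∀ {x y : ↑C}, (farGraph C).Adj x y →
      (fun i : Fin d => ((⌊(x : EuclideanSpace ℝ (Fin d)) i * ((d : ℝ) + 1)⌋ : ℤ) : ZMod (M + 1))) ≠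
      (fun i : Fin d => ((⌊(y : EuclideanSpace ℝ (Fin d)) i * ((d : ℝ) + 1)⌋ : ℤ) : ZMod (M + 1))) := by
    intro x y hxy heq
    have key : ∀ i : Fin d, ⌊(x : EuclideanSpace ℝ (Fin d)) i * ((d : ℝ) + 1)⌋ =
        ⌊(y : EuclideanSpace ℝ (Fin d)) i * ((d : ℝ) + 1)⌋ := by
      intro i
      have h1 := congrFun heq i
      rw [ZMod.intCast_eq_intCast_iff] at h1
      have h2 : ((M : ℤ) + 1) ∣ (⌊(y : EuclideanSpace ℝ (Fin d)) i * ((d : ℝ) + 1)⌋ -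
          ⌊(x : EuclideanSpace ℝ (Fin d)) i * ((d : ℝ) + 1)⌋) := by
        have := Int.ModEq.dvd h1
        simpa using this
      set a := ⌊(x : EuclideanSpace ℝ (Fin d)) i * ((d : ℝ) + 1)⌋ with ha
      set b := ⌊(y : EuclideanSpace ℝ (Fin d)) i * ((d : ℝ) + 1)⌋ with hb
      set t := (x : EuclideanSpace ℝ (Fin d)) i * ((d : ℝ) + 1) with ht
      set s := (y : EuclideanSpace ℝ (Fin d)) i * ((d : ℝ) + 1) with hs
      have ha1 : (a : ℝ) ≤ t := Int.floor_le t
      have ha2 : t - 1 < (a : ℝ) := Int.sub_one_lt_floor t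
      have hb1 : (b : ℝ) ≤ s := Int.floor_le s
      have hb2 : s - 1 < (b : ℝ) := Int.sub_one_lt_floor s
      have hts : |t - s| ≤ ((d : ℝ) + 1) * R := by
        have hdl : dist ((x : EuclideanSpace ℝ (Fin d)) i) ((y : EuclideanSpace ℝ (Fin d)) i) ≤ R :=
          le_trans (coord_dist_le _ _ i) (hR x.2 y.2)
        rw [Real.dist_eq] at hdl
        have : t - s = ((x : EuclideanSpace ℝ (Fin d)) i - (y : EuclideanSpace ℝ (Fin d)) i) * ((d : ℝ) + 1) := by
          rw [ht, hs]; ring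
        rw [this, abs_mul]
        have hd1 : |((d : ℝ) + 1)| = (d : ℝ) + 1 := abs_of_pos (by positivity)
        rw [hd1]
        have : (0:ℝ) ≤ (d : ℝ) + 1 := by positivity
        calc |(x : EuclideanSpace ℝ (Fin d)) i - (y : EuclideanSpace ℝ (Fin d)) i| * ((d : ℝ) + 1)
            ≤ R * ((d : ℝ) + 1) := by
              apply mul_le_mul_of_nonneg_right hdl this
          _ = ((d : ℝ) + 1) * R := by ring
      have habs : |(b - a : ℤ)| < (M : ℤ) + 1 := by
        have hr : |((b : ℝ) - (a : ℝ))| < (M : ℝ) + 1 := by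
          rw [abs_le] at hts
          rw [abs_lt]
          constructor <;> linarith [hts.1, hts.2]
        have h3 : |(((b - a : ℤ)) : ℝ)| < ((((M : ℤ) + 1 : ℤ)) : ℝ) := by push_cast; push_cast at hr; exact hr
        exact_mod_cast h3
      have := Int.eq_zero_of_abs_lt_dvd h2 habs
      omega
    have hclose : ∀ i : Fin d, dist ((x : EuclideanSpace ℝ (Fin d)) i) ((y : EuclideanSpace ℝ (Fin d)) i)
        < 1 / ((d : ℝ) + 1) := by
      intro i
      have h1 := Int.abs_sub_lt_one_of_floor_eq_floor (key i)
      rw [Real.dist_eq]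
      have hd1 : (0:ℝ) < (d : ℝ) + 1 := by positivity
      rw [lt_div_iff₀ hd1]
      calc |(x : EuclideanSpace ℝ (Fin d)) i - (y : EuclideanSpace ℝ (Fin d)) i| * ((d : ℝ) + 1)
          = |((x : EuclideanSpace ℝ (Fin d)) i - (y : EuclideanSpace ℝ (Fin d)) i) * ((d : ℝ) + 1)| := by
            rw [abs_mul, abs_of_pos hd1]
        _ = |(x : EuclideanSpace ℝ (Fin d)) i * ((d : ℝ) + 1) - (y : EuclideanSpace ℝ (Fin d)) i * ((d : ℝ) + 1)| := by
            ring_nf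
        _ < 1 := h1
    have hdist : dist (x : EuclideanSpace ℝ (Fin d)) (y : EuclideanSpace ℝ (Fin d)) ≤ 1 := by
      rw [EuclideanSpace.dist_eq]
      have hsum : ∑ i, dist ((x : EuclideanSpace ℝ (Fin d)) i) ((y : EuclideanSpace ℝ (Fin d)) i) ^ 2
          ≤ 1 := by
        have h1 : ∀ i ∈ Finset.univ, dist ((x : EuclideanSpace ℝ (Fin d)) i) ((y : EuclideanSpace ℝ (Fin d)) i) ^ 2
            ≤ (1 / ((d : ℝ) + 1)) ^ 2 := by
          intro i _
          exact pow_le_pow_left₀ dist_nonneg (hclose i).le 2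
        calc _ ≤ ∑ _i : Fin d, (1 / ((d : ℝ) + 1)) ^ 2 := Finset.sum_le_sum h1
          _ = (d : ℝ) * (1 / ((d : ℝ) + 1)) ^ 2 := by
            rw [Finset.sum_const, Finset.card_univ, Fintype.card_fin]; push_cast; ring
          _ ≤ 1 := by
            rw [div_pow, one_pow]
            have hp : (0:ℝ) < ((d : ℝ) + 1) ^ 2 := by positivity
            rw [mul_one_div, div_le_one hp]
            nlinarith [Nat.cast_nonneg (α := ℝ) d]
      calc Real.sqrt _ ≤ Real.sqrt 1 := Real.sqrt_le_sqrt hsum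
        _ = 1 := Real.sqrt_one
    linarith [hxy.2]
  exact ⟨_, SimpleGraph.Coloring.colorable (SimpleGraph.Coloring.mk _ valid)⟩

/-- Every sandwich function `Ψ` gives a packing bound function via
`A(C) = Ψ(G(C))`, where `G(C)` is the graph on `C` with edges the pairs at distance at
least 2: this assignment satisfies the sphere bound, Lipschitz, union, and mesh axioms. -/
theorem sandwichFunction_gives_packingBoundFunction (Ψ : SandwichFunction) :
    (∀ (d : ℕ) (C : Set (EuclideanSpace ℝ (Fin d))), IsBounded C → MeasurableSet C →
      C.Nonempty → (∃ z, C ⊆ Metric.ball z 1) → Ψ.toFun (farGraph C) = 1) ∧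
    (∀ (d d' : ℕ) (C : Set (EuclideanSpace ℝ (Fin d)))
      (C' : Set (EuclideanSpace ℝ (Fin d'))),
      IsBounded C → MeasurableSet C → IsBounded C' → MeasurableSet C' →
      (∃ ψ : EuclideanSpace ℝ (Fin d) → EuclideanSpace ℝ (Fin d'),
        (∀ x ∈ C, ψ x ∈ C') ∧ ∀ x ∈ C, ∀ y ∈ C, dist x y ≤ dist (ψ x) (ψ y)) →
      Ψ.toFun (farGraph C) ≤ Ψ.toFun (farGraph C')) ∧
    (∀ (d : ℕ) (C C' : Set (EuclideanSpace ℝ (Fin d))),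
      IsBounded C → MeasurableSet C → IsBounded C' → MeasurableSet C' →
      (∀ x ∈ C, ∀ x' ∈ C', 2 ≤ dist x x') →
      Ψ.toFun (farGraph (C ∪ C')) = Ψ.toFun (farGraph C) + Ψ.toFun (farGraph C')) ∧
    (∀ (ε : ℝ), 0 < ε → ∀ (d : ℕ) (C C' : Set (EuclideanSpace ℝ (Fin d))),
      IsBounded C → MeasurableSet C → IsBounded C' → MeasurableSet C' →
      C ⊆ Metric.thickening ε C' →
      Ψ.toFun (farGraph ((1 / (1 + ε)) • C)) ≤ Ψ.toFun (farGraph C')) := by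
  classical
  refine ⟨?_, ?_, ?_, ?_⟩
  · -- sphere bound
    intro d C hB _ hne ⟨z, hz⟩
    have hnoadj : ∀ a b : ↑C, ¬ (farGraph C).Adj a b := by
      rintro a b ⟨_, h2⟩
      have h3 : dist (a : EuclideanSpace ℝ (Fin d)) z < 1 := Metric.mem_ball.mp (hz a.2)
      have h4 : dist (b : EuclideanSpace ℝ (Fin d)) z < 1 := Metric.mem_ball.mp (hz b.2)
      have h5 : dist (a : EuclideanSpace ℝ (Fin d)) (b : EuclideanSpace ℝ (Fin d)) ≤
          dist (a : EuclideanSpace ℝ (Fin d)) z + dist z (b : EuclideanSpace ℝ (Fin d)) :=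
        dist_triangle _ _ _
      rw [dist_comm z] at h5
      linarith
    set G0 : SimpleGraph PUnit := ⊥ with hG0
    have hG0c : G0.chromaticNumber ≠ ⊤ := by
      rw [SimpleGraph.chromaticNumber_ne_top_iff_exists]
      exact ⟨1, (SimpleGraph.Coloring.mk (fun _ => (0 : Fin 1))
        (fun {a b} h => by simp [hG0] at h)).colorable⟩
    have hCc := farGraph_chromaticNumber_ne_top hB
    have f : farGraph C →g G0 := ⟨fun _ => PUnit.unit, fun {a b} h => absurd h (hnoadj a b)⟩
    have g : G0 →g farGraph C :=
      ⟨fun _ => ⟨hne.choose, hne.choose_spec⟩, fun {a b} h => by simp [hG0] at h⟩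
    have h1 := Ψ.mono _ _ hCc hG0c f
    have h2 := Ψ.mono _ _ hG0c hCc g
    have h3 : Ψ.toFun G0 = 1 := Ψ.single_eq G0 ⟨PUnit.unit⟩ inferInstance
    linarith
  · -- Lipschitz
    rintro d d' C C' hB _ hB' _ ⟨ψ, hmem, hdist⟩
    have f : farGraph C →g farGraph C' := by
      refine ⟨fun x => ⟨ψ x, hmem x x.2⟩, ?_⟩
      rintro a b ⟨hne, h2⟩
      have h3 : 2 ≤ dist (ψ (a : EuclideanSpace ℝ (Fin d))) (ψ (b : EuclideanSpace ℝ (Fin d))) :=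
        le_trans h2 (hdist _ a.2 _ b.2)
      refine ⟨?_, h3⟩
      intro hEq
      have : ψ (a : EuclideanSpace ℝ (Fin d)) = ψ (b : EuclideanSpace ℝ (Fin d)) :=
        congrArg Subtype.val hEq
      rw [this] at h3
      simp at h3
      linarith
    exact Ψ.mono _ _ (farGraph_chromaticNumber_ne_top hB) (farGraph_chromaticNumber_ne_top hB') f
  · -- union
    intro d C C' hB _ hB' _ hfar
    have hBu : IsBounded (C ∪ C') := hB.union hB'
    have g : graphJoin (farGraph C) (farGraph C') →g farGraph (C ∪ C') := by
      refine ⟨Sum.elim (fun x => ⟨x, Or.inl x.2⟩) (fun x => ⟨x, Or.inr x.2⟩), ?_⟩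
      rintro (a | a) (b | b) hab
      · obtain ⟨hne, h2⟩ := hab
        refine ⟨fun h => hne ?_, h2⟩
        have hv := congrArg (Subtype.val : ↑(C ∪ C') → EuclideanSpace ℝ (Fin d)) h
        exact Subtype.ext hv
      · have h2 : 2 ≤ dist (a : EuclideanSpace ℝ (Fin d)) (b : EuclideanSpace ℝ (Fin d)) :=
          hfar _ a.2 _ b.2
        refine ⟨fun h => ?_, h2⟩
        have : (a : EuclideanSpace ℝ (Fin d)) = b := congrArg Subtype.val h
        rw [this] at h2; simp at h2; linarith
      · have h2 : 2 ≤ dist (b : EuclideanSpace ℝ (Fin d)) (a : EuclideanSpace ℝ (Fin d)) :=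
          hfar _ b.2 _ a.2
        rw [dist_comm] at h2
        refine ⟨fun h => ?_, h2⟩
        have : (a : EuclideanSpace ℝ (Fin d)) = b := congrArg Subtype.val h
        rw [this] at h2; simp at h2; linarith
      · obtain ⟨hne, h2⟩ := hab
        refine ⟨fun h => hne ?_, h2⟩
        have hv := congrArg (Subtype.val : ↑(C ∪ C') → EuclideanSpace ℝ (Fin d)) h
        exact Subtype.ext hv
    have f : farGraph (C ∪ C') →g graphJoin (farGraph C) (farGraph C') := by
      refine ⟨fun x => if h : (x : EuclideanSpace ℝ (Fin d)) ∈ C then Sum.inl ⟨x, h⟩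
        else Sum.inr ⟨x, x.2.resolve_left h⟩, ?_⟩
      rintro a b ⟨hne, h2⟩
      by_cases ha : (a : EuclideanSpace ℝ (Fin d)) ∈ C <;>
        by_cases hb : (b : EuclideanSpace ℝ (Fin d)) ∈ C <;>
        simp only [ha, hb, dif_pos, dif_neg, not_false_iff]
      · refine ⟨fun h => hne ?_, h2⟩
        have hv := congrArg (Subtype.val : ↑C → EuclideanSpace ℝ (Fin d)) h
        exact Subtype.ext hv
      · trivial
      · trivial
      · refine ⟨fun h => hne ?_, h2⟩
        have hv := congrArg (Subtype.val : ↑C' → EuclideanSpace ℝ (Fin d)) h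
        exact Subtype.ext hv
    have hJc : (graphJoin (farGraph C) (farGraph C')).chromaticNumber ≠ ⊤ :=
      chromaticNumber_ne_top_of_hom g (farGraph_chromaticNumber_ne_top hBu)
    have hUc := farGraph_chromaticNumber_ne_top hBu
    have h1 := Ψ.mono _ _ hUc hJc f
    have h2 := Ψ.mono _ _ hJc hUc g
    have h3 := Ψ.join_add (farGraph C) (farGraph C')
      (farGraph_chromaticNumber_ne_top hB) (farGraph_chromaticNumber_ne_top hB')
    linarith
  · -- mesh
    intro ε hε d C C' hB _ hB' _ hmesh
    have hεne : (1 : ℝ) + ε ≠ 0 := by positivity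
    have key : ∀ u : ↑((1 / (1 + ε)) • C), ∃ y, y ∈ C' ∧
        dist ((1 + ε) • (u : EuclideanSpace ℝ (Fin d))) y < ε := by
      intro u
      obtain ⟨x, hx, hxu⟩ := u.2
      have hxeq : (1 + ε) • (u : EuclideanSpace ℝ (Fin d)) = x := by
        rw [← hxu, smul_smul, mul_one_div, div_self hεne, one_smul]
      rw [hxeq]
      obtain ⟨y, hy, hdy⟩ := Metric.mem_thickening_iff.mp (hmesh hx)
      exact ⟨y, hy, hdy⟩
    have f : farGraph ((1 / (1 + ε)) • C) →g farGraph C' := by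
      refine ⟨fun u => ⟨(key u).choose, (key u).choose_spec.1⟩, ?_⟩
      rintro u v ⟨hne, h2⟩
      have hdu := (key u).choose_spec.2
      have hdv := (key v).choose_spec.2
      have hscale : 2 * (1 + ε) ≤ dist ((1 + ε) • (u : EuclideanSpace ℝ (Fin d)))
          ((1 + ε) • (v : EuclideanSpace ℝ (Fin d))) := by
        rw [dist_smul₀, Real.norm_of_nonneg (by positivity)]
        nlinarith
      have tri := dist_triangle4 ((1 + ε) • (u : EuclideanSpace ℝ (Fin d))) ((key u).choose)
        ((key v).choose) ((1 + ε) • (v : EuclideanSpace ℝ (Fin d)))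
      have hdv' : dist ((key v).choose) ((1 + ε) • (v : EuclideanSpace ℝ (Fin d))) < ε := by
        rw [dist_comm]; exact hdv
      have hgt : 2 < dist ((key u).choose) ((key v).choose) := by linarith
      refine ⟨fun h => ?_, hgt.le⟩
      have : (key u).choose = (key v).choose := congrArg Subtype.val h
      rw [this] at hgt; simp at hgt; linarith
    exact Ψ.mono _ _ (farGraph_chromaticNumber_ne_top (hB.smul₀ _))
      (farGraph_chromaticNumber_ne_top hB') f
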